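/- Assume d is not a square in F. Let Ω : T(F) → ℂ^× be a group homomorphism and B : GL₂(F) → ℂ a function with B(t·g·k) = Ω(t)·B(g) for all t ∈ T(F), g ∈ GL₂(F), k ∈ I. Let C ≥ 2 be an integer such that Ω is nontrivial on U_{C−1}. Then B(diag(ϖ^r, 1)·w) = 0 for every integer r with 0 ≤ r ≤ C − 2. -/

import Mathlib

open Matrix

noncomputable section

abbrev Zm0 : Type := WithZero (Multiplicative ℤ)

/-- `ev n` is the value (in `ℤₘ₀ = WithZero (Multiplicative ℤ)`) of an element of additive
valuation `n`; thus `x ∈ 𝔭^n` iff `v x ≤ ev n`, `x ∈ 𝔬` iff `v x ≤ ev 0`, and `x ∈ 𝔬^×` iff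
`v x = ev 0`. -/
def ev (n : ℤ) : Zm0 := ((Multiplicative.ofAdd (-n) : Multiplicative ℤ) : Zm0)

variable {F : Type*} [Field F]

/-- the matrix t(x,y) = [[x, cy],[−ay, x−by]] -/
def tmat (a b c x y : F) : Matrix (Fin 2) (Fin 2) F :=
  !![x, c * y; -(a * y), x - b * y]

/-- the torus T(F) ⊆ GL₂(F), as a set of matrices -/
def TSet (a b c : F) : Set (Matrix (Fin 2) (Fin 2) F) :=
  {m | ∃ x y : F, x ^ 2 - b * x * y + a * c * y ^ 2 ≠ 0 ∧ m = tmat a b c x y}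

def wmat (F : Type*) [Field F] : Matrix (Fin 2) (Fin 2) F := !![0, 1; -1, 0]

/-- GL₂(𝔬) : integral entries and unit determinant -/
def GL2O (v : Valuation F Zm0) : Set (Matrix (Fin 2) (Fin 2) F) :=
  {g | (∀ i j, v (g i j) ≤ ev 0) ∧ v g.det = ev 0}

/-- the Iwahori subgroup I = { g ∈ GL₂(𝔬) : g₂₁ ∈ 𝔭 } -/
def Iwahori (v : Valuation F Zm0) : Set (Matrix (Fin 2) (Fin 2) F) :=
  {g | g ∈ GL2O v ∧ v (g 1 0) ≤ ev 1}

/-- membership in U_m ⊆ T(F): U_0 = T(F) ∩ GL₂(𝔬), and for m ≥ 1,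
U_m = { t ∈ T(F) : t − 1 ∈ ϖ^m·M₂(𝔬) } -/
def Umem (v : Valuation F Zm0) (a b c : F) (m : ℕ) (t : Matrix (Fin 2) (Fin 2) F) : Prop :=
  t ∈ TSet a b c ∧
    (if m = 0 then (∀ i j, v (t i j) ≤ ev 0) ∧ v t.det = ev 0
     else ∀ i j, v ((t - 1) i j) ≤ ev m)

section MyAux

lemma my_ev_zero : ev 0 = 1 := by simp [ev]

lemma my_ev_le {m n : ℤ} : ev m ≤ ev n ↔ n ≤ m := by
  rw [ev, ev, WithZero.coe_le_coe, Multiplicative.ofAdd_le, neg_le_neg_iff]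

lemma my_ev_lt {m n : ℤ} : ev m < ev n ↔ n < m := by
  rw [ev, ev, WithZero.coe_lt_coe, Multiplicative.ofAdd_lt, neg_lt_neg_iff]

lemma my_ev_add (m n : ℤ) : ev (m + n) = ev m * ev n := by
  rw [ev, ev, ev, ← WithZero.coe_mul, ← ofAdd_add, neg_add]

lemma my_ev_inv (n : ℤ) : (ev n)⁻¹ = ev (-n) := by
  rw [ev, ev, ← WithZero.coe_inv, ← ofAdd_neg, neg_neg]

lemma my_ev_pow (n : ℕ) : (ev 1) ^ n = ev n := by
  induction n with
  | zero => simpa using my_ev_zero.symm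
  | succ k ih =>
      rw [pow_succ, ih, ← my_ev_add]
      norm_num

lemma my_ev_ne_zero (n : ℤ) : ev n ≠ 0 := WithZero.coe_ne_zero

end MyAux
/-- Assume d is not a square.  If Ω : T(F) → ℂ^× is a homomorphism,
B(t·g·k) = Ω(t)·B(g) for t ∈ T(F), k ∈ I, and C ≥ 2 is such that Ω is nontrivial on
U_{C−1}, then B(diag(ϖ^r,1)·w) = 0 for 0 ≤ r ≤ C − 2. -/
theorem stmt9
    (v : Valuation F Zm0) (ϖ : F) (hϖ : v ϖ = ev 1)
    (a b c : F)
    (hao : v a ≤ ev 0) (hbo : v b ≤ ev 0) (hc : v c = ev 0)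
    (hd0 : b ^ 2 - 4 * (a * c) ≠ 0)
    (hnonsq : ∀ s : F, s ^ 2 ≠ b ^ 2 - 4 * (a * c))
    (Ω : Matrix (Fin 2) (Fin 2) F → ℂ)
    (hΩmul : ∀ s t, s ∈ TSet a b c → t ∈ TSet a b c → Ω (s * t) = Ω s * Ω t)
    (hΩne : ∀ t ∈ TSet a b c, Ω t ≠ 0)
    (B : Matrix (Fin 2) (Fin 2) F → ℂ)
    (hB : ∀ t g k, t ∈ TSet a b c → k ∈ Iwahori v → B (t * g * k) = Ω t * B g)
    (C : ℕ) (hC : 2 ≤ C)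
    (hnontriv : ∃ t, Umem v a b c (C - 1) t ∧ Ω t ≠ 1) :
    ∀ r : ℕ, r ≤ C - 2 → B (!![ϖ ^ r, 0; 0, 1] * wmat F) = 0 := by
  intro r hr
  obtain ⟨t, ⟨htT, htU⟩, hΩt⟩ := hnontriv
  have hm : C - 1 ≠ 0 := by omega
  rw [if_neg hm] at htU
  -- entry valuation facts
  have h00 : v (t 0 0 - 1) ≤ ev (C - 1 : ℕ) := by simpa using htU 0 0
  have h01 : v (t 0 1) ≤ ev (C - 1 : ℕ) := by simpa using htU 0 1
  have h10 : v (t 1 0) ≤ ev (C - 1 : ℕ) := by simpa using htU 1 0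
  have h11 : v (t 1 1 - 1) ≤ ev (C - 1 : ℕ) := by simpa using htU 1 1
  have hevM0 : ev (C - 1 : ℕ) ≤ ev 0 := my_ev_le.mpr (by omega)
  -- determinant, kept opaque as Δ
  obtain ⟨Δ, hΔdef⟩ : ∃ D : F, D = t 0 0 * t 1 1 - t 0 1 * t 1 0 := ⟨_, rfl⟩
  have hΔdet : t.det = Δ := by rw [hΔdef]; exact Matrix.det_fin_two t
  have hΔ0 : Δ ≠ 0 := by
    obtain ⟨x, y, hxy, hteq⟩ := htT
    rw [← hΔdet, hteq]
    simp only [tmat, Matrix.det_fin_two_of]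
    intro h; apply hxy; linear_combination h
  -- v Δ = 1
  have hvsmall : v (Δ - 1) < 1 := by
    have hrw : Δ - 1 = (t 0 0 - 1) * (t 1 1 - 1) + (t 0 0 - 1) + (t 1 1 - 1)
        - t 0 1 * t 1 0 := by rw [hΔdef]; ring
    rw [hrw]
    have hlt : ev (C - 1 : ℕ) < 1 := by rw [← my_ev_zero]; exact my_ev_lt.mpr (by omega)
    have hprod : v ((t 0 0 - 1) * (t 1 1 - 1)) < 1 := by
      rw [v.map_mul]
      calc v (t 0 0 - 1) * v (t 1 1 - 1) ≤ ev (C - 1 : ℕ) * ev (C - 1 : ℕ) :=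
            mul_le_mul' h00 h11
        _ ≤ ev (C - 1 : ℕ) * 1 := mul_le_mul' le_rfl (hevM0.trans_eq my_ev_zero)
        _ = ev (C - 1 : ℕ) := mul_one _
        _ < 1 := hlt
    have hprod2 : v (t 0 1 * t 1 0) < 1 := by
      rw [v.map_mul]
      calc v (t 0 1) * v (t 1 0) ≤ ev (C - 1 : ℕ) * ev (C - 1 : ℕ) := mul_le_mul' h01 h10
        _ ≤ ev (C - 1 : ℕ) * 1 := mul_le_mul' le_rfl (hevM0.trans_eq my_ev_zero)
        _ = ev (C - 1 : ℕ) := mul_one _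
        _ < 1 := hlt
    calc v ((t 0 0 - 1) * (t 1 1 - 1) + (t 0 0 - 1) + (t 1 1 - 1) - t 0 1 * t 1 0)
        ≤ max (v ((t 0 0 - 1) * (t 1 1 - 1) + (t 0 0 - 1) + (t 1 1 - 1))) (v (t 0 1 * t 1 0)) :=
          (Valuation.map_sub v _ _)
      _ < 1 := by
          apply max_lt _ hprod2
          calc v ((t 0 0 - 1) * (t 1 1 - 1) + (t 0 0 - 1) + (t 1 1 - 1))
              ≤ max (max (v ((t 0 0 - 1) * (t 1 1 - 1))) (v (t 0 0 - 1))) (v (t 1 1 - 1)) :=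
                le_trans (v.map_add _ _) (max_le_max (v.map_add _ _) le_rfl)
            _ < 1 := max_lt (max_lt hprod (h00.trans_lt hlt)) (h11.trans_lt hlt)
  have hvΔ : v Δ = 1 := by
    have h : Δ = 1 + (Δ - 1) := by ring
    rw [h]
    exact v.map_one_add_of_lt hvsmall
  -- basic valuations
  have hϖ0 : ϖ ≠ 0 := by
    intro h
    rw [h, v.map_zero] at hϖ
    exact (my_ev_ne_zero 1) hϖ.symm
  have hϖr0 : ϖ ^ r ≠ 0 := pow_ne_zero _ hϖ0
  have hvϖr : v (ϖ ^ r) = ev r := by rw [v.map_pow, hϖ, my_ev_pow]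
  have hv00 : v (t 0 0) ≤ 1 := by
    have h : t 0 0 = 1 + (t 0 0 - 1) := by ring
    rw [h]
    exact le_trans (v.map_add _ _) (max_le (le_of_eq v.map_one)
      (le_trans h00 (hevM0.trans_eq my_ev_zero)))
  have hv11 : v (t 1 1) ≤ 1 := by
    have h : t 1 1 = 1 + (t 1 1 - 1) := by ring
    rw [h]
    exact le_trans (v.map_add _ _) (max_le (le_of_eq v.map_one)
      (le_trans h11 (hevM0.trans_eq my_ev_zero)))
  -- the Iwahori element
  set k : Matrix (Fin 2) (Fin 2) F :=
    !![t 0 0 / Δ, ϖ ^ r * t 1 0 / Δ; t 0 1 / (ϖ ^ r * Δ), t 1 1 / Δ] with hkdef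
  have k00 : k 0 0 = t 0 0 / Δ := by simp [hkdef]
  have k01 : k 0 1 = ϖ ^ r * t 1 0 / Δ := by simp [hkdef]
  have k10 : k 1 0 = t 0 1 / (ϖ ^ r * Δ) := by simp [hkdef]
  have k11 : k 1 1 = t 1 1 / Δ := by simp [hkdef]
  have hb01 : v (ϖ ^ r * t 1 0 / Δ) ≤ ev 0 := by
    rw [map_div₀, hvΔ, div_one, v.map_mul, hvϖr]
    calc ev (r : ℤ) * v (t 1 0) ≤ ev (r : ℤ) * ev (C - 1 : ℕ) := mul_le_mul' le_rfl h10
      _ = ev ((r : ℤ) + (C - 1 : ℕ)) := (my_ev_add _ _).symm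
      _ ≤ ev 0 := my_ev_le.mpr (by omega)
  have hb10 : v (t 0 1 / (ϖ ^ r * Δ)) ≤ ev 1 := by
    rw [map_div₀, v.map_mul, hvΔ, hvϖr, mul_one, div_eq_mul_inv, my_ev_inv]
    calc v (t 0 1) * ev (-(r : ℤ)) ≤ ev (C - 1 : ℕ) * ev (-(r : ℤ)) := mul_le_mul' h01 le_rfl
      _ = ev ((C - 1 : ℕ) + -(r : ℤ)) := (my_ev_add _ _).symm
      _ ≤ ev 1 := my_ev_le.mpr (by omega)
  have hk : k ∈ Iwahori v := by
    refine ⟨⟨?_, ?_⟩, ?_⟩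
    · simp only [Fin.forall_fin_two]
      refine ⟨⟨?_, ?_⟩, ?_, ?_⟩
      · rw [k00, map_div₀, hvΔ, div_one, my_ev_zero]; exact hv00
      · rw [k01]; exact hb01
      · rw [k10]; exact hb10.trans (my_ev_le.mpr (by omega))
      · rw [k11, map_div₀, hvΔ, div_one, my_ev_zero]; exact hv11
    · have hdetk : k.det = Δ⁻¹ := by
        rw [hkdef, Matrix.det_fin_two_of, hΔdef] at *
        field_simp
      rw [hdetk, map_inv₀, hvΔ, inv_one, my_ev_zero]
    · rw [k10]; exact hb10
  -- key matrix identity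
  have heq : t * (!![ϖ ^ r, 0; 0, 1] * wmat F) * k = !![ϖ ^ r, 0; 0, 1] * wmat F := by
    have hΔ0' : t 0 0 * t 1 1 - t 0 1 * t 1 0 ≠ 0 := hΔdef ▸ hΔ0
    have hΔ0'' : t 1 1 * t 0 0 - t 0 1 * t 1 0 ≠ 0 := by rw [mul_comm]; exact hΔ0'
    subst hΔdef
    ext i j
    fin_cases i <;> fin_cases j <;>
      simp [hkdef, wmat, Matrix.mul_apply, Fin.sum_univ_two] <;>
      field_simp <;>
      ring
  have hBeq := hB t (!![ϖ ^ r, 0; 0, 1] * wmat F) k htT hk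
  rw [heq] at hBeq
  have hfac : (1 - Ω t) * B (!![ϖ ^ r, 0; 0, 1] * wmat F) = 0 := by
    linear_combination hBeq
  rcases mul_eq_zero.mp hfac with h | h
  · exact absurd (by linear_combination -h) hΩt
  · exact h
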